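/- Under assumption (H3), suppose ε_n = O(1/(N^t_n log N^s_n)). Then there exists C > 0, independent of n, such that for every n: (i) sup_{x ∈ S_n, t ∈ T_n} |U_n(x,t)| ≤ C, where (U_n, M_n) is any solution of the entropy-regularized finite MFG system on the grid (S_n, T_n); and (ii) the induced path measure ξ_n satisfies E_{ξ_n}(∫_0^T |γ̇(t)|^q dt) ≤ C, i.e. Δt_n Σ_{k=0}^{N^t_n−1} E_{ξ_n}(|(γ(t_{k+1}) − γ(t_k))/Δt_n|^q) ≤ C. -/

import Mathlib

open MeasureTheory Filter Topology Set
open scoped ENNReal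

noncomputable section

/-! ### Continuous objects -/

/-- The path space `Γ = C([0,T]; ℝ^d)` with the uniform distance. -/
abbrev PathSpace (T : ℝ) (d : ℕ) := C(Set.Icc (0 : ℝ) T, Fin d → ℝ)

/-- Evaluation of a path at time `t ∈ [0,T]` (times are clamped to `[0,T]`). -/
def ev {T : ℝ} {d : ℕ} (hT : 0 ≤ T) (γ : PathSpace T d) (t : ℝ) : Fin d → ℝ :=
  γ (Set.projIcc 0 T hT t)

/-- The Kantorovich–Rubinstein (Wasserstein-1) distance, via couplings. -/
def W1 {X : Type*} [MeasurableSpace X] [PseudoMetricSpace X] (μ ν : Measure X) : ℝ :=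
  sInf {r : ℝ | ∃ γ : Measure (X × X), γ.map Prod.fst = μ ∧ γ.map Prod.snd = ν ∧
    r = ∫ p, dist p.1 p.2 ∂γ}

/-- `m ∈ P₁(ℝ^d)`: a Borel probability measure with finite first moment. -/
def IsP1 {d : ℕ} (m : Measure (Fin d → ℝ)) : Prop :=
  IsProbabilityMeasure m ∧ (∫⁻ x, ‖x‖₊ ∂m) < ⊤

/-! ### The space/time grids and the associated finite MFG -/

/-- Space step `Δx_n = 1/N^s_n`. -/
def dxn (Ns : ℕ → ℕ) (n : ℕ) : ℝ := 1 / (Ns n : ℝ)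

/-- Time step `Δt_n = T/N^t_n`. -/
def dtn (T : ℝ) (Nt : ℕ → ℕ) (n : ℕ) : ℝ := T / (Nt n : ℝ)

/-- Indices of grid points: `i ∈ ℤ^d` with `|i|_∞ ≤ (N^s_n)²`. -/
def gridIdx (d : ℕ) (Ns : ℕ → ℕ) (n : ℕ) : Finset (Fin d → ℤ) :=
  Finset.Icc (fun _ => -(Ns n : ℤ) ^ 2) fun _ => (Ns n : ℤ) ^ 2

/-- The grid point `x_i = i Δx_n ∈ ℝ^d`. -/
def gpt (d : ℕ) (Ns : ℕ → ℕ) (n : ℕ) (i : Fin d → ℤ) : Fin d → ℝ :=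
  fun j => (i j : ℝ) * dxn Ns n

/-- The simplex of probability vectors indexed by a finite set `A`. -/
def gsimplex {ι : Type*} (A : Finset ι) : Set (ι → ℝ) :=
  {p | (∀ i, 0 ≤ p i) ∧ (∀ i ∉ A, p i = 0) ∧ ∑ i ∈ A, p i = 1}

/-- The (negative) entropy `Σ p log p` (with the convention `0 log 0 = 0`). -/
def entD {ι : Type*} (A : Finset ι) (p : ι → ℝ) : ℝ :=
  ∑ i ∈ A, p i * Real.log (p i)

/-- The measure on `ℝ^d` induced by masses `M` on the grid points. -/
def discMeas (d : ℕ) (Ns : ℕ → ℕ) (n : ℕ) (M : (Fin d → ℤ) → ℝ) :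
    Measure (Fin d → ℝ) :=
  ∑ i ∈ gridIdx d Ns n, ENNReal.ofReal (M i) • Measure.dirac (gpt d Ns n i)

/-- The discretized initial condition `M_{n,0}(x_i) = m₀(E_i^n)`, where `E_i^n` is the
cube of side `Δx_n` centered at `x_i` (a closed ball for the sup norm of `ℝ^d`). -/
def Mzero (d : ℕ) (Ns : ℕ → ℕ) (n : ℕ) (m0 : Measure (Fin d → ℝ)) (i : Fin d → ℤ) : ℝ :=
  (m0 (Metric.closedBall (gpt d Ns n i) (dxn Ns n / 2))).toReal

/-- The one-step entropy-penalized cost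
`p ↦ Σ_j p(j) [Δt_n ℓ((x_j − x_i)/Δt_n) + U(j)] + ε_n E_n(p)`. -/
def stepObj (d : ℕ) (T : ℝ) (Ns Nt : ℕ → ℕ) (n : ℕ) (ℓ : (Fin d → ℝ) → ℝ) (εn : ℝ)
    (U1 : (Fin d → ℤ) → ℝ) (i : Fin d → ℤ) (p : (Fin d → ℤ) → ℝ) : ℝ :=
  (∑ j ∈ gridIdx d Ns n, p j *
      (dtn T Nt n * ℓ ((dtn T Nt n)⁻¹ • (gpt d Ns n j - gpt d Ns n i)) + U1 j)) +
    εn * entD (gridIdx d Ns n) p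

/-- `(U, M, P)` solves the entropy-regularized finite MFG system on the `n`-th grid:
`P(k, i, ·)` is the unique minimizer of the one-step cost, `U` satisfies the dynamic
programming equation, `M` is the induced marginal flow starting from the discretized
initial condition, and `U(N^t_n, ·)` is the terminal cost. -/
def SolvesDiscreteMFG (d : ℕ) (T : ℝ) (Ns Nt : ℕ → ℕ) (eps : ℕ → ℝ)
    (ℓ : (Fin d → ℝ) → ℝ) (f g : (Fin d → ℝ) → Measure (Fin d → ℝ) → ℝ)
    (m0 : Measure (Fin d → ℝ)) (n : ℕ)
    (U M : ℕ → (Fin d → ℤ) → ℝ) (P : ℕ → (Fin d → ℤ) → (Fin d → ℤ) → ℝ) : Prop :=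
  (∀ k < Nt n, ∀ i ∈ gridIdx d Ns n,
    P k i ∈ gsimplex (gridIdx d Ns n) ∧
    (∀ p ∈ gsimplex (gridIdx d Ns n),
      stepObj d T Ns Nt n ℓ (eps n) (U (k + 1)) i (P k i) ≤
        stepObj d T Ns Nt n ℓ (eps n) (U (k + 1)) i p) ∧
    (∀ p ∈ gsimplex (gridIdx d Ns n),
      (∀ p' ∈ gsimplex (gridIdx d Ns n),
        stepObj d T Ns Nt n ℓ (eps n) (U (k + 1)) i p ≤
          stepObj d T Ns Nt n ℓ (eps n) (U (k + 1)) i p') → p = P k i) ∧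
    U k i = stepObj d T Ns Nt n ℓ (eps n) (U (k + 1)) i (P k i) +
      dtn T Nt n * f (gpt d Ns n i) (discMeas d Ns n (M k))) ∧
  (∀ k < Nt n, ∀ j ∈ gridIdx d Ns n,
    M (k + 1) j = ∑ i ∈ gridIdx d Ns n, P k i j * M k i) ∧
  (∀ i ∈ gridIdx d Ns n, M 0 i = Mzero d Ns n m0 i) ∧
  (∀ i ∈ gridIdx d Ns n, U (Nt n) i = g (gpt d Ns n i) (discMeas d Ns n (M (Nt n)))) ∧
  (∀ k ≤ Nt n, M k ∈ gsimplex (gridIdx d Ns n))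

/-- The weight of the discrete trajectory `s` under the kernel `P` with discretized
initial distribution: `M_{n,0}(s_0) Π_k P(s_k, s_{k+1}, t_k)`. -/
def pathWeight (d : ℕ) (Ns Nt : ℕ → ℕ) (n : ℕ) (m0 : Measure (Fin d → ℝ))
    (P : ℕ → (Fin d → ℤ) → (Fin d → ℤ) → ℝ)
    (s : Fin (Nt n + 1) → Fin d → ℤ) : ℝ :=
  Mzero d Ns n m0 (s 0) * ∏ k : Fin (Nt n), P (k : ℕ) (s k.castSucc) (s k.succ)

/-- The probability measure `ξ_n` on `Γ` induced by the discrete MFG solution: the sum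
over discrete trajectories of their weights times the Dirac mass at the corresponding
piecewise affine path `interp s`. -/
def xiMeas (d : ℕ) (T : ℝ) [MeasurableSpace (PathSpace T d)] (Ns Nt : ℕ → ℕ)
    (m0 : Measure (Fin d → ℝ)) (n : ℕ)
    (P : ℕ → (Fin d → ℤ) → (Fin d → ℤ) → ℝ)
    (interp : (Fin (Nt n + 1) → Fin d → ℤ) → PathSpace T d) : Measure (PathSpace T d) :=
  ∑ s ∈ Fintype.piFinset (fun _ : Fin (Nt n + 1) => gridIdx d Ns n),
    ENNReal.ofReal (pathWeight d Ns Nt n m0 P s) • Measure.dirac (interp s)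

section Helpers

lemma entD_nonpos {ι : Type*} (A : Finset ι) (p : ι → ℝ) (hp : p ∈ gsimplex A) :
    entD A p ≤ 0 := by
  obtain ⟨h0, hz, h1⟩ := hp
  refine Finset.sum_nonpos fun i hi => ?_
  have hle : p i ≤ 1 := by
    calc p i ≤ ∑ j ∈ A, p j := Finset.single_le_sum (fun j _ => h0 j) hi
    _ = 1 := h1
  exact mul_nonpos_of_nonneg_of_nonpos (h0 i) (Real.log_nonpos (h0 i) hle)

lemma entD_ge {ι : Type*} (A : Finset ι) (hA : A.Nonempty) (p : ι → ℝ)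
    (hp : p ∈ gsimplex A) : -(Real.log A.card) ≤ entD A p := by
  obtain ⟨h0, hz, h1⟩ := hp
  have hc0 : (0:ℝ) < A.card := by
    exact_mod_cast Finset.card_pos.mpr hA
  have hsw : ∑ _i ∈ A, ((A.card : ℝ))⁻¹ = 1 := by
    rw [Finset.sum_const, nsmul_eq_mul, mul_inv_cancel₀ (ne_of_gt hc0)]
  have hj := Real.convexOn_mul_log.map_sum_le (t := A)
      (w := fun _ => ((A.card : ℝ))⁻¹) (p := p)
      (fun i _ => by positivity) hsw (fun i _ => h0 i)
  have hmean : ∑ i ∈ A, ((A.card : ℝ))⁻¹ • p i = ((A.card : ℝ))⁻¹ := by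
    simp only [smul_eq_mul, ← Finset.mul_sum, h1, mul_one]
  rw [hmean] at hj
  have hlhs : ((A.card : ℝ))⁻¹ * Real.log ((A.card : ℝ))⁻¹
      = ((A.card : ℝ))⁻¹ * (-(Real.log A.card)) := by
    rw [Real.log_inv]
  have hrhs : ∑ i ∈ A, ((A.card : ℝ))⁻¹ • (p i * Real.log (p i))
      = ((A.card : ℝ))⁻¹ * entD A p := by
    simp only [smul_eq_mul, entD, Finset.mul_sum]
  rw [hlhs, hrhs] at hj
  exact le_of_mul_le_mul_left hj (by positivity)

lemma sum_piFinset_succ {ι : Type*} [DecidableEq ι] (A : Finset ι) (N : ℕ)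
    (F : (Fin (N + 2) → ι) → ℝ) :
    ∑ s ∈ Fintype.piFinset (fun _ : Fin (N + 2) => A), F s
      = ∑ x ∈ A, ∑ t ∈ Fintype.piFinset (fun _ : Fin (N + 1) => A), F (Fin.cons x t) := by
  rw [← Finset.sum_product']
  refine Finset.sum_nbij' (fun s => (s 0, fun k => s k.succ)) (fun q => Fin.cons q.1 q.2)
    ?_ ?_ ?_ ?_ ?_
  · intro s hs
    simp only [Fintype.mem_piFinset] at hs
    simp [Finset.mem_product, Fintype.mem_piFinset, hs]
  · intro q hq
    simp only [Finset.mem_product, Fintype.mem_piFinset] at hq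
    simp only [Fintype.mem_piFinset]
    intro k
    induction k using Fin.cases with
    | zero => simpa using hq.1
    | succ k => simpa using hq.2 k
  · intro s hs
    exact Fin.cons_self_tail s
  · intro q hq
    simp [Fin.tail]
  · intro s hs
    exact congrArg F (Fin.cons_self_tail s).symm

lemma prod_cons_decomp {ι : Type*} (N : ℕ) (Q : ℕ → ι → ι → ℝ) (x : ι) (t : Fin (N + 1) → ι) :
    (∏ k : Fin (N + 1), Q (k : ℕ) ((Fin.cons x t : Fin (N + 2) → ι) k.castSucc)
        ((Fin.cons x t : Fin (N + 2) → ι) k.succ))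
      = Q 0 x (t 0) * ∏ k : Fin N, Q ((k : ℕ) + 1) (t k.castSucc) (t k.succ) := by
  rw [Fin.prod_univ_succ]
  have h0 : (Q (((0 : Fin (N + 1)) : ℕ)) ((Fin.cons x t : Fin (N + 2) → ι) (0 : Fin (N+1)).castSucc)
      ((Fin.cons x t : Fin (N + 2) → ι) (0 : Fin (N+1)).succ)) = Q 0 x (t 0) := by simp
  rw [h0]
  refine congrArg _ (Finset.prod_congr rfl fun k _ => ?_)
  rw [← Fin.succ_castSucc, Fin.cons_succ, Fin.cons_succ, Fin.val_succ]

lemma sum_cons_decomp {ι : Type*} (N : ℕ) (g : ℕ → ι → ι → ℝ) (x : ι) (t : Fin (N + 1) → ι) :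
    (∑ k : Fin (N + 1), g (k : ℕ) ((Fin.cons x t : Fin (N + 2) → ι) k.castSucc)
        ((Fin.cons x t : Fin (N + 2) → ι) k.succ))
      = g 0 x (t 0) + ∑ k : Fin N, g ((k : ℕ) + 1) (t k.castSucc) (t k.succ) := by
  rw [Fin.sum_univ_succ]
  have h0 : (g (((0 : Fin (N + 1)) : ℕ)) ((Fin.cons x t : Fin (N + 2) → ι) (0 : Fin (N+1)).castSucc)
      ((Fin.cons x t : Fin (N + 2) → ι) (0 : Fin (N+1)).succ)) = g 0 x (t 0) := by simp
  rw [h0]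
  refine congrArg _ (Finset.sum_congr rfl fun k _ => ?_)
  rw [← Fin.succ_castSucc, Fin.cons_succ, Fin.cons_succ, Fin.val_succ]

lemma mass_lemma {ι : Type*} [DecidableEq ι] (A : Finset ι) :
    ∀ (N : ℕ) (ν : ι → ℝ) (Q : ℕ → ι → ι → ℝ),
      (∀ k < N, ∀ i ∈ A, ∑ j ∈ A, Q k i j = 1) →
      ∑ s ∈ Fintype.piFinset (fun _ : Fin (N + 1) => A),
        ν (s 0) * ∏ k : Fin N, Q (k : ℕ) (s k.castSucc) (s k.succ) = ∑ i ∈ A, ν i := by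
  intro N
  induction N with
  | zero =>
    intro ν Q _
    simp only [Finset.univ_eq_empty, Finset.prod_empty, mul_one]
    refine Finset.sum_nbij' (fun s => s 0) (fun i => fun _ => i) ?_ ?_ ?_ ?_ ?_
    · intro s hs; simp only [Fintype.mem_piFinset] at hs; exact hs 0
    · intro i hi; simp [Fintype.mem_piFinset, hi]
    · intro s _; funext k; exact congrArg s (Fin.eq_zero k).symm
    · intro i _; rfl
    · intro s _; rfl
  | succ N ih =>
    intro ν Q hQ
    rw [sum_piFinset_succ A N]
    refine Finset.sum_congr rfl fun x hx => ?_
    have h2 : ∀ t ∈ Fintype.piFinset (fun _ : Fin (N + 1) => A),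
        ν ((Fin.cons x t : Fin (N + 2) → ι) 0) *
          ∏ k : Fin (N + 1), Q (k : ℕ) ((Fin.cons x t : Fin (N + 2) → ι) k.castSucc)
            ((Fin.cons x t : Fin (N + 2) → ι) k.succ)
        = (fun j => ν x * Q 0 x j) (t 0) *
            ∏ k : Fin N, (fun k' => Q (k' + 1)) (k : ℕ) (t k.castSucc) (t k.succ) := by
      intro t _
      rw [Fin.cons_zero, prod_cons_decomp, ← mul_assoc]
    rw [Finset.sum_congr rfl h2,
      ih (fun j => ν x * Q 0 x j) (fun k => Q (k + 1))
        (fun k hk i hi => hQ (k + 1) (by omega) i hi),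
      ← Finset.mul_sum, hQ 0 (by omega) x hx, mul_one]

lemma cost_lemma {ι : Type*} [DecidableEq ι] (A : Finset ι) :
    ∀ (N : ℕ) (ν : ι → ℝ) (Q : ℕ → ι → ι → ℝ) (g : ℕ → ι → ι → ℝ) (Mq : ℕ → ι → ℝ),
      (∀ i ∈ A, Mq 0 i = ν i) →
      (∀ k < N, ∀ j ∈ A, Mq (k + 1) j = ∑ i ∈ A, Mq k i * Q k i j) →
      (∀ k < N, ∀ i ∈ A, ∑ j ∈ A, Q k i j = 1) →
      ∑ s ∈ Fintype.piFinset (fun _ : Fin (N + 1) => A),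
        (ν (s 0) * ∏ k : Fin N, Q (k : ℕ) (s k.castSucc) (s k.succ)) *
          ∑ k : Fin N, g (k : ℕ) (s k.castSucc) (s k.succ)
        = ∑ k ∈ Finset.range N, ∑ i ∈ A, ∑ j ∈ A, Mq k i * Q k i j * g k i j := by
  intro N
  induction N with
  | zero => intro ν Q g Mq _ _ _; simp
  | succ N ih =>
    intro ν Q g Mq hM0 hMrec hQ
    rw [sum_piFinset_succ A N]
    have h2 : ∀ x ∈ A, ∀ t ∈ Fintype.piFinset (fun _ : Fin (N + 1) => A),
        (ν ((Fin.cons x t : Fin (N + 2) → ι) 0) *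
          ∏ k : Fin (N + 1), Q (k : ℕ) ((Fin.cons x t : Fin (N + 2) → ι) k.castSucc)
            ((Fin.cons x t : Fin (N + 2) → ι) k.succ)) *
          ∑ k : Fin (N + 1), g (k : ℕ) ((Fin.cons x t : Fin (N + 2) → ι) k.castSucc)
            ((Fin.cons x t : Fin (N + 2) → ι) k.succ)
        = (fun j => ν x * Q 0 x j * g 0 x j) (t 0) *
            ∏ k : Fin N, (fun k' => Q (k' + 1)) (k : ℕ) (t k.castSucc) (t k.succ)
          + (ν x * Q 0 x (t 0)) *
            ((∏ k : Fin N, Q ((k : ℕ) + 1) (t k.castSucc) (t k.succ)) *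
              ∑ k : Fin N, g ((k : ℕ) + 1) (t k.castSucc) (t k.succ)) := by
      intro x _ t _
      rw [Fin.cons_zero, prod_cons_decomp, sum_cons_decomp]
      ring
    calc
      ∑ x ∈ A, ∑ t ∈ Fintype.piFinset (fun _ : Fin (N + 1) => A),
        (ν ((Fin.cons x t : Fin (N + 2) → ι) 0) *
          ∏ k : Fin (N + 1), Q (k : ℕ) ((Fin.cons x t : Fin (N + 2) → ι) k.castSucc)
            ((Fin.cons x t : Fin (N + 2) → ι) k.succ)) *
          ∑ k : Fin (N + 1), g (k : ℕ) ((Fin.cons x t : Fin (N + 2) → ι) k.castSucc)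
            ((Fin.cons x t : Fin (N + 2) → ι) k.succ)
        = ∑ x ∈ A, ((∑ j ∈ A, ν x * Q 0 x j * g 0 x j)
            + ∑ t ∈ Fintype.piFinset (fun _ : Fin (N + 1) => A),
              (ν x * Q 0 x (t 0)) *
                ((∏ k : Fin N, Q ((k : ℕ) + 1) (t k.castSucc) (t k.succ)) *
                  ∑ k : Fin N, g ((k : ℕ) + 1) (t k.castSucc) (t k.succ))) := by
          refine Finset.sum_congr rfl fun x hx => ?_
          rw [Finset.sum_congr rfl (h2 x hx), Finset.sum_add_distrib,
            mass_lemma A N (fun j => ν x * Q 0 x j * g 0 x j) (fun k => Q (k + 1))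
              (fun k hk i hi => hQ (k + 1) (by omega) i hi)]
      _ = (∑ i ∈ A, ∑ j ∈ A, Mq 0 i * Q 0 i j * g 0 i j)
            + ∑ t ∈ Fintype.piFinset (fun _ : Fin (N + 1) => A),
              (Mq 1 (t 0) * ∏ k : Fin N, (fun k' => Q (k' + 1)) (k : ℕ) (t k.castSucc) (t k.succ)) *
                ∑ k : Fin N, (fun k' => g (k' + 1)) (k : ℕ) (t k.castSucc) (t k.succ) := by
          rw [Finset.sum_add_distrib]
          congr 1
          · refine Finset.sum_congr rfl fun i hi => Finset.sum_congr rfl fun j hj => ?_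
            rw [hM0 i hi]
          · rw [Finset.sum_comm]
            refine Finset.sum_congr rfl fun t ht => ?_
            have ht0 : t 0 ∈ A := by
              simp only [Fintype.mem_piFinset] at ht; exact ht 0
            have : Mq 1 (t 0) = ∑ x ∈ A, ν x * Q 0 x (t 0) := by
              rw [hMrec 0 (by omega) (t 0) ht0]
              exact Finset.sum_congr rfl fun i hi => by rw [hM0 i hi]
            rw [← Finset.sum_mul, ← this, mul_assoc]
      _ = (∑ i ∈ A, ∑ j ∈ A, Mq 0 i * Q 0 i j * g 0 i j)
            + ∑ k ∈ Finset.range N, ∑ i ∈ A, ∑ j ∈ A,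
                Mq (k + 1) i * Q (k + 1) i j * g (k + 1) i j := by
          rw [ih (fun j => Mq 1 j) (fun k => Q (k + 1)) (fun k => g (k + 1)) (fun k => Mq (k + 1))
            (fun i _ => rfl) (fun k hk j hj => hMrec (k + 1) (by omega) j hj)
            (fun k hk i hi => hQ (k + 1) (by omega) i hi)]
      _ = ∑ k ∈ Finset.range (N + 1), ∑ i ∈ A, ∑ j ∈ A, Mq k i * Q k i j * g k i j := by
          rw [Finset.sum_range_succ']
          ring

lemma gridIdx_nonempty (d : ℕ) (Ns : ℕ → ℕ) (n : ℕ) : (gridIdx d Ns n).Nonempty := by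
  refine ⟨0, Finset.mem_Icc.mpr ⟨fun j => ?_, fun j => ?_⟩⟩
  · simpa using neg_nonpos.mpr (sq_nonneg ((Ns n : ℤ)))
  · simpa using sq_nonneg ((Ns n : ℤ))

lemma gridIdx_card (d : ℕ) (Ns : ℕ → ℕ) (n : ℕ) :
    (gridIdx d Ns n).card = (2 * Ns n ^ 2 + 1) ^ d := by
  have h1 : ((Ns n : ℤ) ^ 2 + 1 - -(Ns n : ℤ) ^ 2).toNat = 2 * Ns n ^ 2 + 1 := by
    have h2 : ((Ns n : ℤ) ^ 2 + 1 - -(Ns n : ℤ) ^ 2) = ((2 * Ns n ^ 2 + 1 : ℕ) : ℤ) := by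
      push_cast; ring
    rw [h2, Int.toNat_natCast]
  rw [gridIdx, Pi.card_Icc]
  simp only [Int.card_Icc, h1]
  rw [Finset.prod_const, Finset.card_univ, Fintype.card_fin]

lemma discMeas_isP1 (d : ℕ) (Ns : ℕ → ℕ) (n : ℕ) (Mk : (Fin d → ℤ) → ℝ)
    (h : Mk ∈ gsimplex (gridIdx d Ns n)) : IsP1 (discMeas d Ns n Mk) := by
  obtain ⟨h0, hz, h1⟩ := h
  constructor
  · constructor
    rw [discMeas, Measure.finset_sum_apply]
    simp only [Measure.smul_apply, smul_eq_mul, measure_univ, mul_one]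
    rw [← ENNReal.ofReal_sum_of_nonneg (fun i _ => h0 i), h1, ENNReal.ofReal_one]
  · rw [discMeas, lintegral_finset_sum_measure]
    refine ENNReal.sum_lt_top.mpr fun i _ => ?_
    rw [lintegral_smul_measure,
      lintegral_dirac' _ (measurable_nnnorm.coe_nnreal_ennreal)]
    exact ENNReal.mul_lt_top ENNReal.ofReal_lt_top ENNReal.coe_lt_top

lemma dirac_mem_gsimplex {ι : Type*} [DecidableEq ι] {A : Finset ι} {i : ι} (hi : i ∈ A) :
    (fun j => if j = i then (1 : ℝ) else 0) ∈ gsimplex A := by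
  refine ⟨fun j => by simp only []; split_ifs <;> norm_num, fun j hj => ?_, ?_⟩
  · simp only []; rw [if_neg]; rintro rfl; exact hj hi
  · rw [Finset.sum_ite_eq' A i (fun _ => (1 : ℝ))]; exact if_pos hi

lemma stepObj_dirac (d : ℕ) (T : ℝ) (Ns Nt : ℕ → ℕ) (n : ℕ) (ℓ : (Fin d → ℝ) → ℝ) (εn : ℝ)
    (U1 : (Fin d → ℤ) → ℝ) (i : Fin d → ℤ) (hi : i ∈ gridIdx d Ns n) :
    stepObj d T Ns Nt n ℓ εn U1 i (fun j => if j = i then 1 else 0)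
      = dtn T Nt n * ℓ 0 + U1 i := by
  rw [stepObj]
  have h1 : ∑ j ∈ gridIdx d Ns n, (if j = i then (1 : ℝ) else 0) *
      (dtn T Nt n * ℓ ((dtn T Nt n)⁻¹ • (gpt d Ns n j - gpt d Ns n i)) + U1 j)
      = dtn T Nt n * ℓ 0 + U1 i := by
    rw [Finset.sum_eq_single i (fun j _ hj => by rw [if_neg hj, zero_mul])
      (fun h => absurd hi h)]
    rw [if_pos rfl, one_mul, sub_self, smul_zero]
  have h2 : entD (gridIdx d Ns n) (fun j => if j = i then (1 : ℝ) else 0) = 0 := by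
    refine Finset.sum_eq_zero fun j _ => ?_
    by_cases h : j = i <;> simp [h]
  rw [h1, h2, mul_zero, add_zero]

lemma xi_integral (d : ℕ) (T : ℝ) (hT : 0 < T) [MeasurableSpace (PathSpace T d)]
    [BorelSpace (PathSpace T d)] (q : ℝ) (hq : 0 < q) (Ns Nt : ℕ → ℕ) (n : ℕ)
    (hNtn : 0 < Nt n) (m0 : Measure (Fin d → ℝ))
    (P : ℕ → (Fin d → ℤ) → (Fin d → ℤ) → ℝ)
    (hP : ∀ s ∈ Fintype.piFinset (fun _ : Fin (Nt n + 1) => gridIdx d Ns n),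
      0 ≤ pathWeight d Ns Nt n m0 P s)
    (interp : (Fin (Nt n + 1) → Fin d → ℤ) → PathSpace T d)
    (hinterp : ∀ s : Fin (Nt n + 1) → Fin d → ℤ, ∀ k : Fin (Nt n), ∀ t : ℝ,
      t ∈ Set.Icc (((k : ℕ) : ℝ) * dtn T Nt n) ((((k : ℕ) : ℝ) + 1) * dtn T Nt n) →
      ev hT.le (interp s) t = gpt d Ns n (s k.castSucc) +
        ((t - ((k : ℕ) : ℝ) * dtn T Nt n) / dtn T Nt n) •
          (gpt d Ns n (s k.succ) - gpt d Ns n (s k.castSucc))) :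
    (∫ γ, (∑ k : Fin (Nt n), dtn T Nt n *
        ‖(dtn T Nt n)⁻¹ • (ev hT.le γ ((((k : ℕ) : ℝ) + 1) * dtn T Nt n) -
          ev hT.le γ (((k : ℕ) : ℝ) * dtn T Nt n))‖ ^ q)
      ∂(xiMeas d T Ns Nt m0 n P interp))
    = ∑ s ∈ Fintype.piFinset (fun _ : Fin (Nt n + 1) => gridIdx d Ns n),
        pathWeight d Ns Nt n m0 P s * ∑ k : Fin (Nt n), dtn T Nt n *
          ‖(dtn T Nt n)⁻¹ • (gpt d Ns n (s k.succ) - gpt d Ns n (s k.castSucc))‖ ^ q := by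
  have hΔ : 0 < dtn T Nt n := div_pos hT (by exact_mod_cast hNtn)
  set Δ : ℝ := dtn T Nt n with hΔdef
  set F : PathSpace T d → ℝ := fun γ => ∑ k : Fin (Nt n), Δ *
      ‖Δ⁻¹ • (ev hT.le γ ((((k : ℕ) : ℝ) + 1) * Δ) - ev hT.le γ (((k : ℕ) : ℝ) * Δ))‖ ^ q
    with hFdef
  have hev : ∀ t : ℝ, Continuous fun γ : PathSpace T d => ev hT.le γ t := by
    intro t
    exact continuous_eval_const _
  have hFc : Continuous F := by
    refine continuous_finset_sum _ fun k _ => ?_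
    refine continuous_const.mul ?_
    refine Continuous.rpow_const ?_ (fun γ => Or.inr hq.le)
    exact (((hev ((((k : ℕ) : ℝ) + 1) * Δ)).sub (hev (((k : ℕ) : ℝ) * Δ))).const_smul Δ⁻¹).norm
  have hFsm : StronglyMeasurable F := hFc.stronglyMeasurable
  have hIntegr : ∀ s ∈ Fintype.piFinset (fun _ : Fin (Nt n + 1) => gridIdx d Ns n),
      Integrable F (ENNReal.ofReal (pathWeight d Ns Nt n m0 P s) •
        Measure.dirac (interp s)) := by
    intro s _
    refine Integrable.smul_measure ⟨hFsm.aestronglyMeasurable, ?_⟩ ENNReal.ofReal_ne_top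
    have : (∫⁻ a, (‖F a‖₊ : ℝ≥0∞) ∂(Measure.dirac (interp s))) < ⊤ := by
      rw [lintegral_dirac' _ (hFsm.measurable.nnnorm.coe_nnreal_ennreal)]
      exact ENNReal.coe_lt_top
    exact this
  rw [xiMeas, integral_finset_sum_measure hIntegr]
  refine Finset.sum_congr rfl fun s hs => ?_
  rw [integral_smul_measure, integral_dirac' F _ hFsm, ENNReal.toReal_ofReal (hP s hs),
    smul_eq_mul]
  congr 1
  refine Finset.sum_congr rfl fun k _ => ?_
  have hk1 : (((k : ℕ) : ℝ)) * Δ ≤ (((k : ℕ) : ℝ) + 1) * Δ := by nlinarith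
  have hmem2 : (((k : ℕ) : ℝ) + 1) * Δ ∈
      Set.Icc (((k : ℕ) : ℝ) * Δ) ((((k : ℕ) : ℝ) + 1) * Δ) := ⟨hk1, le_rfl⟩
  have hmem1 : (((k : ℕ) : ℝ)) * Δ ∈
      Set.Icc (((k : ℕ) : ℝ) * Δ) ((((k : ℕ) : ℝ) + 1) * Δ) := ⟨le_rfl, hk1⟩
  rw [hinterp s k _ hmem2, hinterp s k _ hmem1]
  have c2 : ((((k : ℕ) : ℝ) + 1) * Δ - ((k : ℕ) : ℝ) * Δ) / Δ = 1 := by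
    rw [div_eq_one_iff_eq hΔ.ne']; ring
  have c1 : ((((k : ℕ) : ℝ)) * Δ - ((k : ℕ) : ℝ) * Δ) / Δ = 0 := by
    rw [sub_self, zero_div]
  rw [c2, c1, one_smul, zero_smul, add_zero]
  have harr : gpt d Ns n (s k.castSucc) + (gpt d Ns n (s k.succ) - gpt d Ns n (s k.castSucc))
      - gpt d Ns n (s k.castSucc) = gpt d Ns n (s k.succ) - gpt d Ns n (s k.castSucc) := by
    abel
  rw [harr]

end Helpers

set_option maxHeartbeats 4000000 in
/-- Lemma 4.1 of the paper: under (H3) and `ε_n = O(1/(N^t_n log N^s_n))`, the value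
functions `U_n` are uniformly bounded on the grids, and the expected kinetic energy
`E_{ξ_n}(∫_0^T |γ̇|^q dt)` is uniformly bounded. -/
theorem discrete_mfg_uniform_bounds
    (d : ℕ) (T : ℝ) (hT : 0 < T) (q : ℝ) (hq : 1 < q)
    [MeasurableSpace (PathSpace T d)] [BorelSpace (PathSpace T d)]
    -- (H3)(i)
    (ℓ : (Fin d → ℝ) → ℝ) (hlcont : Continuous ℓ)
    (lo hi Cℓ : ℝ) (hlo : 0 < lo) (hhi : 0 < hi) (hCℓ : 0 < Cℓ)
    (hgrowth : ∀ α : Fin d → ℝ, lo * ‖α‖ ^ q - Cℓ ≤ ℓ α ∧ ℓ α ≤ hi * ‖α‖ ^ q + Cℓ)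
    -- (H3)(ii)
    (f g : (Fin d → ℝ) → Measure (Fin d → ℝ) → ℝ)
    (Cb : ℝ) (hCb : 0 < Cb)
    (hbound : ∀ m, IsP1 m → ∀ x, |f x m| ≤ Cb ∧ |g x m| ≤ Cb)
    (hxLip : ∀ m, IsP1 m → ∀ x y,
      |f x m - f y m| ≤ Cb * ‖x - y‖ ∧ |g x m - g y m| ≤ Cb * ‖x - y‖)
    (hcont : ∀ x m, IsP1 m → ∀ ε > (0 : ℝ), ∃ δ > (0 : ℝ), ∀ y m', IsP1 m' →
      ‖y - x‖ < δ → W1 m m' < δ → |f y m' - f x m| < ε ∧ |g y m' - g x m| < ε)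
    -- (H3)(iii)
    (m0 : Measure (Fin d → ℝ)) (hm0 : IsProbabilityMeasure m0)
    (hm0supp : ∃ R : ℝ, m0 (Metric.closedBall 0 R)ᶜ = 0)
    -- the grids
    (Ns Nt : ℕ → ℕ) (hNs : ∀ n, 0 < Ns n) (hNt : ∀ n, 0 < Nt n)
    (hNsInfty : Tendsto (fun n => (Ns n : ℝ)) atTop atTop)
    (hNtInfty : Tendsto (fun n => (Nt n : ℝ)) atTop atTop)
    (eps : ℕ → ℝ) (heps : ∀ n, 0 < eps n) (heps0 : Tendsto eps atTop (𝓝 0))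
    -- ε_n = O(1/(N^t_n log N^s_n))
    (hepsO : ∃ Kb : ℝ, ∀ n, eps n * ((Nt n : ℝ) * Real.log (Ns n)) ≤ Kb)
    -- the solutions of the finite MFGs and the induced path measures
    (U M : ℕ → ℕ → (Fin d → ℤ) → ℝ)
    (P : ℕ → ℕ → (Fin d → ℤ) → (Fin d → ℤ) → ℝ)
    (hsol : ∀ n, SolvesDiscreteMFG d T Ns Nt eps ℓ f g m0 n (U n) (M n) (P n))
    (interp : (n : ℕ) → (Fin (Nt n + 1) → Fin d → ℤ) → PathSpace T d)
    (hinterp : ∀ n, ∀ s : Fin (Nt n + 1) → Fin d → ℤ, ∀ k : Fin (Nt n), ∀ t : ℝ,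
      t ∈ Set.Icc (((k : ℕ) : ℝ) * dtn T Nt n) ((((k : ℕ) : ℝ) + 1) * dtn T Nt n) →
      ev hT.le (interp n s) t = gpt d Ns n (s k.castSucc) +
        ((t - ((k : ℕ) : ℝ) * dtn T Nt n) / dtn T Nt n) •
          (gpt d Ns n (s k.succ) - gpt d Ns n (s k.castSucc))) :
    ∃ C > (0 : ℝ), ∀ n,
      (∀ k ≤ Nt n, ∀ i ∈ gridIdx d Ns n, |U n k i| ≤ C) ∧
      (∫ γ, (∑ k : Fin (Nt n), dtn T Nt n *
          ‖(dtn T Nt n)⁻¹ • (ev hT.le γ ((((k : ℕ) : ℝ) + 1) * dtn T Nt n) -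
            ev hT.le γ (((k : ℕ) : ℝ) * dtn T Nt n))‖ ^ q)
        ∂(xiMeas d T Ns Nt m0 n (P n) (interp n))) ≤ C := by
  classical
  obtain ⟨Kb0, hKb⟩ := hepsO
  obtain ⟨K, hKdef⟩ : ∃ x : ℝ, x = max Kb0 0 := ⟨_, rfl⟩
  have hK0 : 0 ≤ K := hKdef ▸ le_max_right _ _
  have hq0 : (0:ℝ) < q := lt_trans one_pos hq
  obtain ⟨C1, hC1def⟩ : ∃ x : ℝ, x = Cb + T * (Cℓ + Cb) + 4 * d * K := ⟨_, rfl⟩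
  have hC1pos : 0 < C1 := by
    have h1 : 0 < T * (Cℓ + Cb) := mul_pos hT (by linarith)
    have h2 : (0:ℝ) ≤ 4 * d * K := by positivity
    rw [hC1def]; linarith
  obtain ⟨C2, hC2def⟩ : ∃ x : ℝ, x = (2 * C1 + T * Cb + 4 * d * K + Cℓ * T) / lo := ⟨_, rfl⟩
  obtain ⟨N₀, hN₀⟩ := Filter.eventually_atTop.mp (hNsInfty.eventually_ge_atTop 2)
  have hprodne : ∀ m, ((Finset.range (Nt m + 1)) ×ˢ gridIdx d Ns m).Nonempty :=
    fun m => Finset.Nonempty.product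
      (Finset.nonempty_range_iff.mpr (Nat.succ_ne_zero _)) (gridIdx_nonempty d Ns m)
  obtain ⟨B, hBdef⟩ : ∃ x : ℕ → ℝ, x = fun m => ((Finset.range (Nt m + 1)) ×ˢ gridIdx d Ns m).sup'
    (hprodne m) (fun kp => |U m kp.1 kp.2|) := ⟨_, rfl⟩
  obtain ⟨I, hIdef⟩ : ∃ x : ℕ → ℝ, x = fun m => ∫ γ, (∑ k : Fin (Nt m), dtn T Nt m *
      ‖(dtn T Nt m)⁻¹ • (ev hT.le γ ((((k : ℕ) : ℝ) + 1) * dtn T Nt m) -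
        ev hT.le γ (((k : ℕ) : ℝ) * dtn T Nt m))‖ ^ q)
    ∂(xiMeas d T Ns Nt m0 m (P m) (interp m)) := ⟨_, rfl⟩
  have hB0 : ∀ m, 0 ≤ B m := by
    intro m
    obtain ⟨x, hx⟩ := hprodne m
    calc (0:ℝ) ≤ |U m x.1 x.2| := abs_nonneg _
      _ ≤ B m := by rw [hBdef]; exact Finset.le_sup' (fun kp => |U m kp.1 kp.2|) hx
  obtain ⟨Csum, hCsumdef⟩ : ∃ x : ℝ, x = ∑ m ∈ Finset.range N₀, (B m + |I m|) := ⟨_, rfl⟩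
  have hCsum0 : 0 ≤ Csum := by
    rw [hCsumdef]
    exact Finset.sum_nonneg fun m _ => add_nonneg (hB0 m) (abs_nonneg _)
  obtain ⟨C, hCdef⟩ : ∃ x : ℝ, x = max C1 C2 + 1 + Csum := ⟨_, rfl⟩
  have hmax1 : C1 ≤ max C1 C2 := le_max_left _ _
  have hmax2 : C2 ≤ max C1 C2 := le_max_right _ _
  have hCpos : 0 < C := by rw [hCdef]; linarith
  have hCge1 : C1 ≤ C := by rw [hCdef]; linarith
  have hCge2 : C2 ≤ C := by rw [hCdef]; linarith
  refine ⟨C, hCpos, fun n => ?_⟩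
  by_cases hn : n < N₀
  · -- small n : trivial finite bounds
    have hle : B n + |I n| ≤ Csum := by
      rw [hCsumdef]
      exact Finset.single_le_sum (f := fun m => B m + |I m|)
        (fun m _ => add_nonneg (hB0 m) (abs_nonneg _)) (Finset.mem_range.mpr hn)
    constructor
    · intro k hk i hi
      have hmemp : (k, i) ∈ Finset.range (Nt n + 1) ×ˢ gridIdx d Ns n :=
        Finset.mem_product.mpr ⟨Finset.mem_range.mpr (by omega), hi⟩
      have h1 : |U n k i| ≤ B n := by
        rw [hBdef]
        exact Finset.le_sup' (fun kp => |U n kp.1 kp.2|) hmemp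
      have h2 : (0:ℝ) ≤ max C1 C2 + 1 := by linarith
      rw [hCdef]
      calc |U n k i| ≤ B n := h1
        _ ≤ Csum := by have := abs_nonneg (I n); linarith
        _ ≤ max C1 C2 + 1 + Csum := by linarith
    · have h1 : I n ≤ |I n| := le_abs_self _
      rw [hCdef]
      calc (∫ γ, (∑ k : Fin (Nt n), dtn T Nt n *
          ‖(dtn T Nt n)⁻¹ • (ev hT.le γ ((((k : ℕ) : ℝ) + 1) * dtn T Nt n) -
            ev hT.le γ (((k : ℕ) : ℝ) * dtn T Nt n))‖ ^ q)
          ∂(xiMeas d T Ns Nt m0 n (P n) (interp n))) = I n := by rw [hIdef]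
        _ ≤ |I n| := h1
        _ ≤ max C1 C2 + 1 + Csum := by have := hB0 n; linarith
  · -- large n : uniform bounds
    push_neg at hn
    have hNs2 : (2:ℝ) ≤ (Ns n : ℝ) := hN₀ n hn
    obtain ⟨hDPP, hMrec, hM0, hUT, hMs⟩ := hsol n
    have hΔ : 0 < dtn T Nt n := div_pos hT (by exact_mod_cast hNt n)
    have hNt0 : (0:ℝ) < (Nt n : ℝ) := by exact_mod_cast hNt n
    have hTdt : (Nt n : ℝ) * dtn T Nt n = T := by
      rw [dtn]; field_simp
    have hAne := gridIdx_nonempty d Ns n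
    have hcard1 : 1 ≤ (gridIdx d Ns n).card := Finset.card_pos.mpr hAne
    obtain ⟨L, hLdef⟩ : ∃ x : ℝ, x = Real.log ((gridIdx d Ns n).card) := ⟨_, rfl⟩
    have hL0 : 0 ≤ L := hLdef ▸ Real.log_nonneg (by exact_mod_cast hcard1)
    have hNs1 : (1:ℝ) ≤ (Ns n : ℝ) := by linarith
    have hlogNs : 0 ≤ Real.log (Ns n) := Real.log_nonneg hNs1
    have hLle : L ≤ (d:ℝ) * (4 * Real.log (Ns n)) := by
      rw [hLdef, gridIdx_card, Nat.cast_pow, Real.log_pow]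
      have h24 : ((2 * Ns n ^ 2 + 1 : ℕ) : ℝ) ≤ (Ns n : ℝ) ^ 4 := by
        push_cast
        nlinarith [sq_nonneg ((Ns n : ℝ) - 2), sq_nonneg ((Ns n : ℝ) ^ 2 - 2), hNs2]
      have hlog := Real.log_le_log (by positivity) h24
      have h4 : Real.log ((Ns n : ℝ) ^ 4) = 4 * Real.log (Ns n) := by
        rw [Real.log_pow]; norm_num
      rw [h4] at hlog
      exact mul_le_mul_of_nonneg_left hlog (Nat.cast_nonneg d)
    have hεNtL : eps n * ((Nt n : ℝ) * L) ≤ 4 * d * K := by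
      have h1 : eps n * ((Nt n : ℝ) * L) ≤
          eps n * ((Nt n : ℝ) * ((d:ℝ) * (4 * Real.log (Ns n)))) := by
        refine mul_le_mul_of_nonneg_left ?_ (heps n).le
        exact mul_le_mul_of_nonneg_left hLle hNt0.le
      have h2 : eps n * ((Nt n : ℝ) * ((d:ℝ) * (4 * Real.log (Ns n))))
          = 4 * d * (eps n * ((Nt n : ℝ) * Real.log (Ns n))) := by ring
      have h3 : eps n * ((Nt n : ℝ) * Real.log (Ns n)) ≤ K :=
        le_trans (hKb n) (hKdef ▸ le_max_left _ _)
      have h4 := mul_le_mul_of_nonneg_left h3 (by positivity : (0:ℝ) ≤ 4 * d)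
      linarith [h1, h2.le, h2.ge]
    have hIsP1 : ∀ k, k ≤ Nt n → IsP1 (discMeas d Ns n (M n k)) :=
      fun k hk => discMeas_isP1 d Ns n (M n k) (hMs k hk)
    obtain ⟨b, hbdef⟩ : ∃ x : ℝ, x = dtn T Nt n * (Cℓ + Cb) + eps n * L := ⟨_, rfl⟩
    have hεL0 : 0 ≤ eps n * L := mul_nonneg (heps n).le hL0
    have hb0 : 0 ≤ b := by
      rw [hbdef]
      have : 0 ≤ dtn T Nt n * (Cℓ + Cb) := mul_nonneg hΔ.le (by linarith)
      linarith
    have hUb : ∀ j, j ≤ Nt n → ∀ i ∈ gridIdx d Ns n,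
        |U n (Nt n - j) i| ≤ Cb + j * b := by
      intro j
      induction j with
      | zero =>
        intro _ i hi
        rw [Nat.sub_zero, hUT i hi]
        have h := (hbound _ (hIsP1 (Nt n) le_rfl) (gpt d Ns n i)).2
        simpa using h
      | succ j ihj =>
        intro hj i hi
        have hkNt : Nt n - (j + 1) < Nt n := by omega
        have hk1 : Nt n - (j + 1) + 1 = Nt n - j := by omega
        obtain ⟨hPsimp, hPmin, _, hUk⟩ := hDPP _ hkNt i hi
        have IH : ∀ i' ∈ gridIdx d Ns n, |U n (Nt n - (j + 1) + 1) i'| ≤ Cb + j * b := by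
          rw [hk1]; exact ihj (by omega)
        have hfb := (hbound _ (hIsP1 _ hkNt.le) (gpt d Ns n i)).1
        have hble : dtn T Nt n * (Cℓ + Cb) ≤ b := by rw [hbdef]; linarith
        have hup : U n (Nt n - (j + 1)) i ≤
            U n (Nt n - (j + 1) + 1) i + dtn T Nt n * (Cℓ + Cb) := by
          have hdir := hPmin _ (dirac_mem_gsimplex hi)
          rw [stepObj_dirac d T Ns Nt n ℓ (eps n) _ i hi] at hdir
          have hl0 : ℓ 0 ≤ Cℓ := by
            have h := (hgrowth 0).2
            rw [norm_zero, Real.zero_rpow (ne_of_gt hq0)] at h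
            linarith
          have hfle : f (gpt d Ns n i) (discMeas d Ns n (M n (Nt n - (j + 1)))) ≤ Cb :=
            (abs_le.mp hfb).2
          rw [hUk]
          have h1 : dtn T Nt n * ℓ 0 ≤ dtn T Nt n * Cℓ :=
            mul_le_mul_of_nonneg_left hl0 hΔ.le
          have h2 : dtn T Nt n * f (gpt d Ns n i) (discMeas d Ns n (M n (Nt n - (j + 1))))
              ≤ dtn T Nt n * Cb := mul_le_mul_of_nonneg_left hfle hΔ.le
          linarith [hdir, h1, h2]
        have hlow : -(Cb + j * b + b) ≤ U n (Nt n - (j + 1)) i := by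
          obtain ⟨hp0, hpz, hp1⟩ := hPsimp
          have hterm : ∀ j' ∈ gridIdx d Ns n,
              -(dtn T Nt n * Cℓ + (Cb + j * b)) ≤
              dtn T Nt n * ℓ ((dtn T Nt n)⁻¹ • (gpt d Ns n j' - gpt d Ns n i)) +
                U n (Nt n - (j + 1) + 1) j' := by
            intro j' hj'
            have h1 : -Cℓ ≤ ℓ ((dtn T Nt n)⁻¹ • (gpt d Ns n j' - gpt d Ns n i)) := by
              have hg := (hgrowth ((dtn T Nt n)⁻¹ • (gpt d Ns n j' - gpt d Ns n i))).1
              have h0 : 0 ≤ lo * ‖(dtn T Nt n)⁻¹ • (gpt d Ns n j' - gpt d Ns n i)‖ ^ q :=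
                mul_nonneg hlo.le (Real.rpow_nonneg (norm_nonneg _) q)
              linarith
            have h2 := (abs_le.mp (IH j' hj')).1
            have h3 := mul_le_mul_of_nonneg_left h1 hΔ.le
            have h4 : dtn T Nt n * (-Cℓ) = -(dtn T Nt n * Cℓ) := by ring
            linarith
          have hsum : -(dtn T Nt n * Cℓ + (Cb + j * b)) ≤
              ∑ j' ∈ gridIdx d Ns n, P n (Nt n - (j + 1)) i j' *
                (dtn T Nt n * ℓ ((dtn T Nt n)⁻¹ • (gpt d Ns n j' - gpt d Ns n i)) +
                  U n (Nt n - (j + 1) + 1) j') := by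
            calc -(dtn T Nt n * Cℓ + (Cb + j * b))
                = ∑ j' ∈ gridIdx d Ns n, P n (Nt n - (j + 1)) i j' *
                    -(dtn T Nt n * Cℓ + (Cb + j * b)) := by
                  rw [← Finset.sum_mul, hp1, one_mul]
              _ ≤ _ := Finset.sum_le_sum fun j' hj' =>
                  mul_le_mul_of_nonneg_left (hterm j' hj') (hp0 j')
          have hent : -(eps n * L) ≤
              eps n * entD (gridIdx d Ns n) (P n (Nt n - (j + 1)) i) := by
            have hE := entD_ge _ hAne _ ⟨hp0, hpz, hp1⟩
            have h5 := mul_le_mul_of_nonneg_left hE (heps n).le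
            have h6 : eps n * -Real.log ((gridIdx d Ns n).card)
                = -(eps n * Real.log ((gridIdx d Ns n).card)) := by ring
            rw [hLdef]
            linarith
          have hflow : -(dtn T Nt n * Cb) ≤
              dtn T Nt n * f (gpt d Ns n i) (discMeas d Ns n (M n (Nt n - (j + 1)))) := by
            have h := (abs_le.mp hfb).1
            have h5 := mul_le_mul_of_nonneg_left h hΔ.le
            have h6 : dtn T Nt n * -Cb = -(dtn T Nt n * Cb) := by ring
            linarith
          rw [hUk, stepObj]
          have hbexp : b = dtn T Nt n * (Cℓ + Cb) + eps n * L := hbdef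
          linarith
        rw [abs_le]
        push_cast
        constructor
        · linarith
        · have h3 := (abs_le.mp (IH i hi)).2
          linarith
    have hUall : ∀ k, k ≤ Nt n → ∀ i ∈ gridIdx d Ns n, |U n k i| ≤ C1 := by
      intro k hk i hi
      have h1 := hUb (Nt n - k) (by omega) i hi
      rw [Nat.sub_sub_self hk] at h1
      have h2 : ((Nt n - k : ℕ) : ℝ) ≤ (Nt n : ℝ) := by
        exact_mod_cast Nat.sub_le _ _
      have h3 : ((Nt n - k : ℕ) : ℝ) * b ≤ (Nt n : ℝ) * b :=
        mul_le_mul_of_nonneg_right h2 hb0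
      have h4 : (Nt n : ℝ) * b = (Nt n : ℝ) * dtn T Nt n * (Cℓ + Cb)
          + eps n * ((Nt n : ℝ) * L) := by rw [hbdef]; ring
      rw [hTdt] at h4
      rw [hC1def]
      linarith
    refine ⟨fun k hk i hi => (hUall k hk i hi).trans hCge1, ?_⟩
    -- part (ii)
    have hrows : ∀ k < Nt n, ∀ i ∈ gridIdx d Ns n,
        ∑ j ∈ gridIdx d Ns n, P n k i j = 1 :=
      fun k hk i hi => (hDPP k hk i hi).1.2.2
    have hPnn : ∀ k < Nt n, ∀ i ∈ gridIdx d Ns n, ∀ j, 0 ≤ P n k i j :=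
      fun k hk i hi => (hDPP k hk i hi).1.1
    have hwnn : ∀ s ∈ Fintype.piFinset (fun _ : Fin (Nt n + 1) => gridIdx d Ns n),
        0 ≤ pathWeight d Ns Nt n m0 (P n) s := by
      intro s hs
      refine mul_nonneg ENNReal.toReal_nonneg (Finset.prod_nonneg fun k _ => ?_)
      have hsk : s k.castSucc ∈ gridIdx d Ns n := by
        simp only [Fintype.mem_piFinset] at hs; exact hs _
      exact hPnn k k.isLt _ hsk _
    have hxi := xi_integral d T hT q hq0 Ns Nt n (hNt n) m0 (P n) hwnn
      (interp n) (hinterp n)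
    have hcost := cost_lemma (gridIdx d Ns n) (Nt n) (Mzero d Ns n m0) (P n)
      (fun _ i jj => dtn T Nt n * ‖(dtn T Nt n)⁻¹ • (gpt d Ns n jj - gpt d Ns n i)‖ ^ q)
      (M n) (fun i hi => hM0 i hi)
      (fun k hk jj hj => by
        rw [hMrec k hk jj hj]
        exact Finset.sum_congr rfl fun i _ => mul_comm _ _)
      hrows
    obtain ⟨S, hSdef⟩ : ∃ x : ℕ → ℝ, x = fun k => ∑ i ∈ gridIdx d Ns n, M n k i * U n k i := ⟨_, rfl⟩
    have hSbd : ∀ k, k ≤ Nt n → |S k| ≤ C1 := by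
      intro k hk
      obtain ⟨hM0k, hMzk, hM1k⟩ := hMs k hk
      simp only [hSdef]
      rw [abs_le]
      constructor
      · have h : ∑ i ∈ gridIdx d Ns n, M n k i * (-C1) ≤
            ∑ i ∈ gridIdx d Ns n, M n k i * U n k i :=
          Finset.sum_le_sum fun i hi =>
            mul_le_mul_of_nonneg_left ((abs_le.mp (hUall k hk i hi)).1) (hM0k i)
        rw [← Finset.sum_mul, hM1k, one_mul] at h
        linarith
      · have h : (∑ i ∈ gridIdx d Ns n, M n k i * U n k i) ≤
            ∑ i ∈ gridIdx d Ns n, M n k i * C1 :=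
          Finset.sum_le_sum fun i hi =>
            mul_le_mul_of_nonneg_left ((abs_le.mp (hUall k hk i hi)).2) (hM0k i)
        rw [← Finset.sum_mul, hM1k, one_mul] at h
        linarith
    have hstep : ∀ k, k < Nt n →
        lo * (∑ i ∈ gridIdx d Ns n, ∑ jj ∈ gridIdx d Ns n, M n k i * P n k i jj *
          (dtn T Nt n * ‖(dtn T Nt n)⁻¹ • (gpt d Ns n jj - gpt d Ns n i)‖ ^ q))
        ≤ S k - S (k + 1) + (dtn T Nt n * Cb + eps n * L + Cℓ * dtn T Nt n) := by
      intro k hk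
      simp only [hSdef]
      obtain ⟨hM0k, hMzk, hM1k⟩ := hMs k hk.le
      have hGle : ∀ i ∈ gridIdx d Ns n, ∀ jj ∈ gridIdx d Ns n,
          lo * (dtn T Nt n * ‖(dtn T Nt n)⁻¹ • (gpt d Ns n jj - gpt d Ns n i)‖ ^ q)
          ≤ dtn T Nt n * ℓ ((dtn T Nt n)⁻¹ • (gpt d Ns n jj - gpt d Ns n i))
            + dtn T Nt n * Cℓ := by
        intro i _ jj _
        have hg := (hgrowth ((dtn T Nt n)⁻¹ • (gpt d Ns n jj - gpt d Ns n i))).1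
        have h5 := mul_le_mul_of_nonneg_left hg hΔ.le
        have h6 : dtn T Nt n *
            (lo * ‖(dtn T Nt n)⁻¹ • (gpt d Ns n jj - gpt d Ns n i)‖ ^ q - Cℓ)
            = lo * (dtn T Nt n * ‖(dtn T Nt n)⁻¹ • (gpt d Ns n jj - gpt d Ns n i)‖ ^ q)
              - dtn T Nt n * Cℓ := by ring
        linarith
      have hDPPi : ∀ i ∈ gridIdx d Ns n,
          (∑ jj ∈ gridIdx d Ns n, P n k i jj *
            (dtn T Nt n * ℓ ((dtn T Nt n)⁻¹ • (gpt d Ns n jj - gpt d Ns n i))))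
          ≤ U n k i - (∑ jj ∈ gridIdx d Ns n, P n k i jj * U n (k + 1) jj)
            + (dtn T Nt n * Cb + eps n * L) := by
        intro i hi
        obtain ⟨hPsimp, _, _, hUk⟩ := hDPP k hk i hi
        obtain ⟨hp0, hpz, hp1⟩ := hPsimp
        have hsplit : (∑ jj ∈ gridIdx d Ns n, P n k i jj *
              (dtn T Nt n * ℓ ((dtn T Nt n)⁻¹ • (gpt d Ns n jj - gpt d Ns n i))
                + U n (k + 1) jj))
            = (∑ jj ∈ gridIdx d Ns n, P n k i jj *
                (dtn T Nt n * ℓ ((dtn T Nt n)⁻¹ • (gpt d Ns n jj - gpt d Ns n i))))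
              + ∑ jj ∈ gridIdx d Ns n, P n k i jj * U n (k + 1) jj := by
          rw [← Finset.sum_add_distrib]
          exact Finset.sum_congr rfl fun jj _ => by ring
        have hent := entD_ge _ hAne _ ⟨hp0, hpz, hp1⟩
        have hent2 := mul_le_mul_of_nonneg_left hent (heps n).le
        have hent3 : eps n * -Real.log ((gridIdx d Ns n).card)
            = -(eps n * Real.log ((gridIdx d Ns n).card)) := by ring
        have hfb := (hbound _ (hIsP1 k hk.le) (gpt d Ns n i)).1
        have hf1 := (abs_le.mp hfb).1
        have hf2 := mul_le_mul_of_nonneg_left hf1 hΔ.le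
        have hf3 : dtn T Nt n * -Cb = -(dtn T Nt n * Cb) := by ring
        have hUk2 : U n k i = (∑ jj ∈ gridIdx d Ns n, P n k i jj *
              (dtn T Nt n * ℓ ((dtn T Nt n)⁻¹ • (gpt d Ns n jj - gpt d Ns n i))
                + U n (k + 1) jj))
            + eps n * entD (gridIdx d Ns n) (P n k i)
            + dtn T Nt n * f (gpt d Ns n i) (discMeas d Ns n (M n k)) := by
          rw [hUk, stepObj]
        rw [hsplit] at hUk2
        rw [hLdef]
        linarith
      have hswap : (∑ i ∈ gridIdx d Ns n, M n k i *
            ∑ jj ∈ gridIdx d Ns n, P n k i jj * U n (k + 1) jj)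
          = ∑ jj ∈ gridIdx d Ns n, M n (k + 1) jj * U n (k + 1) jj := by
        have e1 : ∀ i ∈ gridIdx d Ns n, M n k i *
              ∑ jj ∈ gridIdx d Ns n, P n k i jj * U n (k + 1) jj
            = ∑ jj ∈ gridIdx d Ns n, M n k i * (P n k i jj * U n (k + 1) jj) :=
          fun i _ => Finset.mul_sum _ _ _
        rw [Finset.sum_congr rfl e1, Finset.sum_comm]
        refine Finset.sum_congr rfl fun jj hj => ?_
        rw [hMrec k hk jj hj, Finset.sum_mul]
        exact Finset.sum_congr rfl fun i _ => by ring
      have hperi : ∀ i ∈ gridIdx d Ns n,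
          (∑ jj ∈ gridIdx d Ns n, P n k i jj *
            (lo * (dtn T Nt n * ‖(dtn T Nt n)⁻¹ • (gpt d Ns n jj - gpt d Ns n i)‖ ^ q)))
          ≤ U n k i - (∑ jj ∈ gridIdx d Ns n, P n k i jj * U n (k + 1) jj)
            + (dtn T Nt n * Cb + eps n * L + Cℓ * dtn T Nt n) := by
        intro i hi
        have hp0 := hPnn k hk i hi
        have h1 : (∑ jj ∈ gridIdx d Ns n, P n k i jj *
              (lo * (dtn T Nt n * ‖(dtn T Nt n)⁻¹ • (gpt d Ns n jj - gpt d Ns n i)‖ ^ q)))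
            ≤ ∑ jj ∈ gridIdx d Ns n, P n k i jj *
              (dtn T Nt n * ℓ ((dtn T Nt n)⁻¹ • (gpt d Ns n jj - gpt d Ns n i))
                + dtn T Nt n * Cℓ) :=
          Finset.sum_le_sum fun jj hj =>
            mul_le_mul_of_nonneg_left (hGle i hi jj hj) (hp0 jj)
        have h2 : (∑ jj ∈ gridIdx d Ns n, P n k i jj *
              (dtn T Nt n * ℓ ((dtn T Nt n)⁻¹ • (gpt d Ns n jj - gpt d Ns n i))
                + dtn T Nt n * Cℓ))
            = (∑ jj ∈ gridIdx d Ns n, P n k i jj *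
                (dtn T Nt n * ℓ ((dtn T Nt n)⁻¹ • (gpt d Ns n jj - gpt d Ns n i))))
              + (∑ jj ∈ gridIdx d Ns n, P n k i jj) * (dtn T Nt n * Cℓ) := by
          rw [Finset.sum_mul, ← Finset.sum_add_distrib]
          exact Finset.sum_congr rfl fun jj _ => by ring
        rw [h2, hrows k hk i hi, one_mul] at h1
        have h3 := hDPPi i hi
        have h4 : dtn T Nt n * Cℓ = Cℓ * dtn T Nt n := by ring
        linarith
      have hmain : lo * (∑ i ∈ gridIdx d Ns n, ∑ jj ∈ gridIdx d Ns n,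
            M n k i * P n k i jj *
            (dtn T Nt n * ‖(dtn T Nt n)⁻¹ • (gpt d Ns n jj - gpt d Ns n i)‖ ^ q))
          = ∑ i ∈ gridIdx d Ns n, M n k i * (∑ jj ∈ gridIdx d Ns n, P n k i jj *
            (lo * (dtn T Nt n * ‖(dtn T Nt n)⁻¹ • (gpt d Ns n jj - gpt d Ns n i)‖ ^ q))) := by
        rw [Finset.mul_sum]
        refine Finset.sum_congr rfl fun i _ => ?_
        rw [Finset.mul_sum, Finset.mul_sum]
        exact Finset.sum_congr rfl fun jj _ => by ring
      rw [hmain]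
      have h5 : (∑ i ∈ gridIdx d Ns n, M n k i * (∑ jj ∈ gridIdx d Ns n, P n k i jj *
            (lo * (dtn T Nt n * ‖(dtn T Nt n)⁻¹ • (gpt d Ns n jj - gpt d Ns n i)‖ ^ q))))
          ≤ ∑ i ∈ gridIdx d Ns n, M n k i *
            (U n k i - (∑ jj ∈ gridIdx d Ns n, P n k i jj * U n (k + 1) jj)
              + (dtn T Nt n * Cb + eps n * L + Cℓ * dtn T Nt n)) :=
        Finset.sum_le_sum fun i hi =>
          mul_le_mul_of_nonneg_left (hperi i hi) (hM0k i)
      have h6 : (∑ i ∈ gridIdx d Ns n, M n k i *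
            (U n k i - (∑ jj ∈ gridIdx d Ns n, P n k i jj * U n (k + 1) jj)
              + (dtn T Nt n * Cb + eps n * L + Cℓ * dtn T Nt n)))
          = (∑ i ∈ gridIdx d Ns n, M n k i * U n k i)
            - (∑ i ∈ gridIdx d Ns n, M n k i *
                ∑ jj ∈ gridIdx d Ns n, P n k i jj * U n (k + 1) jj)
            + (∑ i ∈ gridIdx d Ns n, M n k i) *
                (dtn T Nt n * Cb + eps n * L + Cℓ * dtn T Nt n) := by
        rw [Finset.sum_mul, ← Finset.sum_sub_distrib, ← Finset.sum_add_distrib]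
        exact Finset.sum_congr rfl fun i _ => by ring
      rw [h6, hswap, hM1k, one_mul] at h5
      linarith
    have htot : lo * (∑ k ∈ Finset.range (Nt n), ∑ i ∈ gridIdx d Ns n,
        ∑ jj ∈ gridIdx d Ns n, M n k i * P n k i jj *
          (dtn T Nt n * ‖(dtn T Nt n)⁻¹ • (gpt d Ns n jj - gpt d Ns n i)‖ ^ q))
        ≤ 2 * C1 + T * Cb + 4 * d * K + Cℓ * T := by
      rw [Finset.mul_sum]
      have h1 : ∑ k ∈ Finset.range (Nt n), lo * (∑ i ∈ gridIdx d Ns n,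
          ∑ jj ∈ gridIdx d Ns n, M n k i * P n k i jj *
            (dtn T Nt n * ‖(dtn T Nt n)⁻¹ • (gpt d Ns n jj - gpt d Ns n i)‖ ^ q))
          ≤ ∑ k ∈ Finset.range (Nt n), (S k - S (k + 1) +
            (dtn T Nt n * Cb + eps n * L + Cℓ * dtn T Nt n)) :=
        Finset.sum_le_sum fun k hk => hstep k (Finset.mem_range.mp hk)
      rw [Finset.sum_add_distrib, Finset.sum_range_sub' S (Nt n), Finset.sum_const,
        Finset.card_range, nsmul_eq_mul] at h1
      have h2 : (Nt n : ℝ) * (dtn T Nt n * Cb + eps n * L + Cℓ * dtn T Nt n)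
          = ((Nt n : ℝ) * dtn T Nt n) * Cb + eps n * ((Nt n : ℝ) * L)
            + Cℓ * ((Nt n : ℝ) * dtn T Nt n) := by ring
      rw [hTdt] at h2
      have h3 := hSbd 0 (by omega)
      have h4 := hSbd (Nt n) le_rfl
      have h5 := (abs_le.mp h3).2
      have h6 := (abs_le.mp h4).1
      linarith
    have hC2bd : (∑ k ∈ Finset.range (Nt n), ∑ i ∈ gridIdx d Ns n,
        ∑ jj ∈ gridIdx d Ns n, M n k i * P n k i jj *
          (dtn T Nt n * ‖(dtn T Nt n)⁻¹ • (gpt d Ns n jj - gpt d Ns n i)‖ ^ q)) ≤ C2 := by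
      rw [hC2def, le_div_iff₀ hlo]
      linarith
    calc (∫ γ, (∑ k : Fin (Nt n), dtn T Nt n *
          ‖(dtn T Nt n)⁻¹ • (ev hT.le γ ((((k : ℕ) : ℝ) + 1) * dtn T Nt n) -
            ev hT.le γ (((k : ℕ) : ℝ) * dtn T Nt n))‖ ^ q)
        ∂(xiMeas d T Ns Nt m0 n (P n) (interp n)))
        = ∑ s ∈ Fintype.piFinset (fun _ : Fin (Nt n + 1) => gridIdx d Ns n),
            pathWeight d Ns Nt n m0 (P n) s * ∑ k : Fin (Nt n), dtn T Nt n *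
              ‖(dtn T Nt n)⁻¹ • (gpt d Ns n (s k.succ) -
                gpt d Ns n (s k.castSucc))‖ ^ q := hxi
      _ = ∑ k ∈ Finset.range (Nt n), ∑ i ∈ gridIdx d Ns n, ∑ jj ∈ gridIdx d Ns n,
            M n k i * P n k i jj *
              (dtn T Nt n * ‖(dtn T Nt n)⁻¹ • (gpt d Ns n jj - gpt d Ns n i)‖ ^ q) := by
          rw [← hcost]
          refine Finset.sum_congr rfl fun s _ => ?_
          simp only [pathWeight]
      _ ≤ C2 := hC2bd
      _ ≤ C := hCge2
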